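/- For vectors ξ, η ∈ ℋ that are continuous and compactly supported, the slice (ω_{ξ,η} ⊗ id)(U_A) equals the operator L_f, where f(x̃,ỹ,r) = ∫ ξ(x̃,ỹ,r̃+r) (e^{λr})ⁿ conj(η(e^{λr}x̃, e^{λr}ỹ, r̃)) dr̃; moreover f is continuous with compact support. -/

import Mathlib

open MeasureTheory
noncomputable section

/-- ℝⁿ -/
abbrev Rn (n : ℕ) := Fin n → ℝ

/-- η_λ(r) = (e^{2λr} − 1)/(2λ) -/
def eta (l r : ℝ) : ℝ := (Real.exp (2 * l * r) - 1) / (2 * l)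

/-- ē(t) = e^{−2πit} -/
def ebar (t : ℝ) : ℂ := Complex.exp (-2 * Real.pi * t * Complex.I)

/-- standard inner product β on ℝⁿ -/
def beta {n : ℕ} (x y : Rn n) : ℝ := ∑ i, x i * y i

/-- membership in 𝒜: Schwartz in (x,y,r), compactly supported in r -/
def IsA {n : ℕ} (f : Rn n → Rn n → ℝ → ℂ) : Prop :=
  (∃ F : SchwartzMap ((Rn n × Rn n) × ℝ) ℂ, ∀ x y r, f x y r = F ((x, y), r)) ∧
  (∃ C : ℝ, ∀ x y r, f x y r ≠ 0 → |r| ≤ C)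

/-- twisted convolution product -/
def tMul {n : ℕ} (l : ℝ) (f g : Rn n → Rn n → ℝ → ℂ) : Rn n → Rn n → ℝ → ℂ :=
  fun x y r => ∫ xt : Rn n, ∫ yt : Rn n,
    f xt yt r * g (x - xt) (y - yt) r * ebar (eta l r * beta xt (y - yt))

/-- twisted involution -/
def tStar {n : ℕ} (l : ℝ) (f : Rn n → Rn n → ℝ → ℂ) : Rn n → Rn n → ℝ → ℂ :=
  fun x y r => (starRingEnd ℂ) (f (-x) (-y) r) * ebar (eta l r * beta x y)

/-- φ(f) = ∫ f(0,0,r) dr -/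
def PhiF {n : ℕ} (f : Rn n → Rn n → ℝ → ℂ) : ℂ := ∫ r : ℝ, f 0 0 r

/-- continuous with compact support (as a function of all variables) -/
def CC {n : ℕ} (ξ : Rn n → Rn n → ℝ → ℂ) : Prop :=
  Continuous (fun p : (Rn n × Rn n) × ℝ => ξ p.1.1 p.1.2 p.2) ∧
  HasCompactSupport (fun p : (Rn n × Rn n) × ℝ => ξ p.1.1 p.1.2 p.2)

/-- L² inner product ⟨f,g⟩ (linear in the first variable, conjugate in the second) -/
def ip {n : ℕ} (f g : Rn n → Rn n → ℝ → ℂ) : ℂ :=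
  ∫ x : Rn n, ∫ y : Rn n, ∫ r : ℝ, f x y r * (starRingEnd ℂ) (g x y r)

/-- the regular representation L_f ξ (same integral formula as the twisted product) -/
def Lop {n : ℕ} (l : ℝ) (f ξ : Rn n → Rn n → ℝ → ℂ) : Rn n → Rn n → ℝ → ℂ :=
  tMul l f ξ

/-- functions of two triples of variables (elements of ℋ ⊗ ℋ, as functions) -/
abbrev F6 (n : ℕ) := Rn n → Rn n → ℝ → Rn n → Rn n → ℝ → ℂ

/-- the multiplicative unitary U_A -/
def Uop {n : ℕ} (l : ℝ) (ξ : F6 n) : F6 n :=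
  fun x y r x' y' r' =>
    (((Real.exp (-l * r')) ^ n : ℝ) : ℂ) *
      ebar (eta l r' * beta (Real.exp (-l * r') • x) (y' - Real.exp (-l * r') • y)) *
      ξ (Real.exp (-l * r') • x) (Real.exp (-l * r') • y) (r + r')
        (x' - Real.exp (-l * r') • x) (y' - Real.exp (-l * r') • y) r'

/-- uncurrying of a six-variable function -/
def unc6 {n : ℕ} (ξ : F6 n) :
    ((Rn n × Rn n) × ℝ) × ((Rn n × Rn n) × ℝ) → ℂ :=
  fun p => ξ p.1.1.1 p.1.1.2 p.1.2 p.2.1.1 p.2.1.2 p.2.2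

/-- elementary tensor ξ ⊗ ζ -/
def tens {n : ℕ} (ξ ζ : Rn n → Rn n → ℝ → ℂ) : F6 n :=
  fun x y r x' y' r' => ξ x y r * ζ x' y' r'

/-- the inner product of ℋ ⊗ ℋ -/
def ip6 {n : ℕ} (Ξ Θ : F6 n) : ℂ :=
  ∫ x : Rn n, ∫ y : Rn n, ∫ r : ℝ, ∫ x' : Rn n, ∫ y' : Rn n, ∫ r' : ℝ,
    Ξ x y r x' y' r' * (starRingEnd ℂ) (Θ x y r x' y' r')


/- ===== auxiliary development ===== -/

namespace SliceAux

abbrev QQ (n : ℕ) := (Rn n × Rn n) × ℝ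

instance (n : ℕ) : IsFiniteMeasureOnCompacts (volume : Measure (QQ n × QQ n)) :=
  Measure.prod.instIsFiniteMeasureOnCompacts _ _

section Generic
variable {α β : Type*} [TopologicalSpace α] [TopologicalSpace β]

theorem hcs_snd [T2Space β] {g : α × β → ℂ} (hs : HasCompactSupport g) (a : α) :
    HasCompactSupport fun b => g (a, b) := by
  apply HasCompactSupport.intro (IsCompact.image hs continuous_snd)
  intro b hb
  by_contra h
  exact hb ⟨(a, b), subset_tsupport _ h, rfl⟩

theorem hcs_fst [T2Space α] {g : α × β → ℂ} (hs : HasCompactSupport g) (b : β) :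
    HasCompactSupport fun a => g (a, b) := by
  apply HasCompactSupport.intro (IsCompact.image hs continuous_fst)
  intro a ha
  by_contra h
  exact ha ⟨(a, b), subset_tsupport _ h, rfl⟩

theorem cont_integral_param [FirstCountableTopology α] [MeasurableSpace β] [OpensMeasurableSpace β]
    [T2Space β] {μ : Measure β} [IsFiniteMeasureOnCompacts μ]
    {g : α × β → ℂ} (hc : Continuous g) (hs : HasCompactSupport g) :
    Continuous fun a => ∫ b, g (a, b) ∂μ := by
  obtain ⟨C, hC⟩ := hc.norm.bounded_above_of_compact_support hs.norm
  have hKc : IsCompact (Prod.snd '' tsupport g) := IsCompact.image hs continuous_snd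
  apply continuous_of_dominated (bound := (Prod.snd '' tsupport g).indicator fun _ => C)
  · exact fun a => (hc.comp (Continuous.prodMk_right a)).aestronglyMeasurable
  · intro a
    filter_upwards with b
    by_cases hb : b ∈ Prod.snd '' tsupport g
    · simpa [Set.indicator_of_mem hb] using hC (a, b)
    · have hz : g (a, b) = 0 := by
        by_contra h
        exact hb ⟨(a, b), subset_tsupport _ h, rfl⟩
      simp [Set.indicator_of_notMem hb, hz]
  · exact (integrableOn_const hKc.measure_lt_top.ne).integrable_indicator
      hKc.isClosed.measurableSet
  · exact Filter.Eventually.of_forall fun b => hc.comp (Continuous.prodMk_left b)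

theorem hcs_integral_param [T2Space α] [MeasurableSpace β] {μ : Measure β}
    {g : α × β → ℂ} (hs : HasCompactSupport g) :
    HasCompactSupport fun a => ∫ b, g (a, b) ∂μ := by
  apply HasCompactSupport.intro (IsCompact.image hs continuous_fst)
  intro a ha
  have hz : ∀ b, g (a, b) = 0 := by
    intro b
    by_contra h
    exact ha ⟨(a, b), subset_tsupport _ h, rfl⟩
  simp [hz]

theorem hcs_swap [T2Space α] [T2Space β] {g : α × β → ℂ} (hs : HasCompactSupport g) :
    HasCompactSupport fun q : β × α => g (q.2, q.1) := by
  apply HasCompactSupport.intro (IsCompact.image hs (continuous_snd.prodMk continuous_fst))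
  intro q hq
  by_contra h
  exact hq ⟨(q.2, q.1), subset_tsupport _ h, rfl⟩

end Generic

theorem cont_ebar : Continuous ebar := by
  unfold ebar
  fun_prop

theorem cont_eta (l : ℝ) : Continuous (eta l) := by
  unfold eta
  fun_prop

theorem cont_beta {n : ℕ} : Continuous fun p : Rn n × Rn n => beta p.1 p.2 := by
  unfold beta
  exact continuous_finset_sum _ fun i _ =>
    ((continuous_apply i).comp continuous_fst).mul ((continuous_apply i).comp continuous_snd)

theorem bound_r {n : ℕ} {g : Rn n → Rn n → ℝ → ℂ} (hg : CC g) :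
    ∃ C : ℝ, ∀ x y r, g x y r ≠ 0 → |r| ≤ C := by
  obtain ⟨C, hC⟩ := (Metric.isBounded_iff_subset_closedBall 0).1
    ((IsCompact.image hg.2 continuous_snd).isBounded)
  refine ⟨C, fun x y r h => ?_⟩
  have : r ∈ Metric.closedBall (0 : ℝ) C :=
    hC ⟨((x, y), r), subset_tsupport _ h, rfl⟩
  simpa [Real.dist_eq] using this

/-- iterated triple integral equals the integral over `QQ n` -/
theorem iter3 {n : ℕ} (h : QQ n → ℂ) (hc : Continuous h) (hs : HasCompactSupport h) :
    (∫ x : Rn n, ∫ y : Rn n, ∫ r : ℝ, h ((x, y), r)) = ∫ p : QQ n, h p := by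
  have h2 : Integrable h ((volume : Measure (Rn n × Rn n)).prod (volume : Measure ℝ)) :=
    hc.integrable_of_hasCompactSupport hs
  have hg : Continuous fun q : Rn n × Rn n => ∫ r : ℝ, h (q, r) :=
    cont_integral_param hc hs
  have hgs : HasCompactSupport fun q : Rn n × Rn n => ∫ r : ℝ, h (q, r) :=
    hcs_integral_param hs
  have h3 : Integrable (fun q : Rn n × Rn n => ∫ r : ℝ, h (q, r))
      ((volume : Measure (Rn n)).prod (volume : Measure (Rn n))) :=
    hg.integrable_of_hasCompactSupport hgs
  calc ∫ x : Rn n, ∫ y : Rn n, ∫ r : ℝ, h ((x, y), r)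
      = ∫ q : Rn n × Rn n, ∫ r : ℝ, h (q, r) := (integral_prod _ h3).symm
    _ = ∫ p : QQ n, h p := (integral_prod _ h2).symm

theorem iter6 {n : ℕ} (F : QQ n × QQ n → ℂ) (hc : Continuous F) (hs : HasCompactSupport F) :
    (∫ x : Rn n, ∫ y : Rn n, ∫ r : ℝ, ∫ x' : Rn n, ∫ y' : Rn n, ∫ r' : ℝ,
      F (((x, y), r), ((x', y'), r'))) = ∫ p : QQ n, ∫ b : QQ n, F (p, b) := by
  have h1 : ∀ p : QQ n,
      (∫ x' : Rn n, ∫ y' : Rn n, ∫ r' : ℝ, F (p, ((x', y'), r'))) = ∫ b : QQ n, F (p, b) :=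
    fun p => iter3 _ (hc.comp (Continuous.prodMk_right p)) (hcs_snd hs p)
  calc (∫ x : Rn n, ∫ y : Rn n, ∫ r : ℝ, ∫ x' : Rn n, ∫ y' : Rn n, ∫ r' : ℝ,
      F (((x, y), r), ((x', y'), r')))
      = ∫ x : Rn n, ∫ y : Rn n, ∫ r : ℝ, (fun p => ∫ b : QQ n, F (p, b)) ((x, y), r) := by
        simp only [h1]
    _ = ∫ p : QQ n, ∫ b : QQ n, F (p, b) :=
        iter3 _ (cont_integral_param hc hs) (hcs_integral_param hs)

theorem swap6 {n : ℕ} (F : QQ n × QQ n → ℂ) (hc : Continuous F) (hs : HasCompactSupport F) :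
    (∫ p : QQ n, ∫ b : QQ n, F (p, b)) = ∫ b : QQ n, ∫ p : QQ n, F (p, b) :=
  integral_integral_swap_of_hasCompactSupport (f := fun p b => F (p, b)) hc hs

/-- The common integrand. -/
def PhiK {n : ℕ} (l : ℝ) (ξ η ζ ζ' : Rn n → Rn n → ℝ → ℂ) : QQ n × QQ n → ℂ :=
  fun p =>
    ξ p.1.1.1 p.1.1.2 (p.1.2 + p.2.2) * (((Real.exp (l * p.2.2)) ^ n : ℝ) : ℂ) *
      (starRingEnd ℂ)
        (η (Real.exp (l * p.2.2) • p.1.1.1) (Real.exp (l * p.2.2) • p.1.1.2) p.1.2) *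
      ζ (p.2.1.1 - p.1.1.1) (p.2.1.2 - p.1.1.2) p.2.2 *
      ebar (eta l p.2.2 * beta p.1.1.1 (p.2.1.2 - p.1.1.2)) *
      (starRingEnd ℂ) (ζ' p.2.1.1 p.2.1.2 p.2.2)

/-- The left-hand-side integrand. -/
def LmbK {n : ℕ} (l : ℝ) (ξ ζ η ζ' : Rn n → Rn n → ℝ → ℂ) : QQ n × QQ n → ℂ :=
  fun p => unc6 (Uop l (tens ξ ζ)) p * (starRingEnd ℂ) (unc6 (tens η ζ') p)

/-- The left integrand after the change of variables, as a function of the new variables. -/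
def A0 {n : ℕ} (l : ℝ) (ξ ζ η ζ' : Rn n → Rn n → ℝ → ℂ) (x' y' : Rn n) (r' : ℝ) :
    Rn n → Rn n → ℝ → ℂ :=
  fun u v r =>
    (((Real.exp (-l * r')) ^ n : ℝ) : ℂ) * ebar (eta l r' * beta u (y' - v)) *
      (ξ u v (r + r') * ζ (x' - u) (y' - v) r') *
      (starRingEnd ℂ) (η (Real.exp (l * r') • u) (Real.exp (l * r') • v) r * ζ' x' y' r')

theorem cc_PhiK {n : ℕ} (l : ℝ) {ξ η ζ ζ' : Rn n → Rn n → ℝ → ℂ}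
    (hξ : CC ξ) (hη : CC η) (hζ : CC ζ) (hζ' : CC ζ') :
    Continuous (PhiK l ξ η ζ ζ') ∧ HasCompactSupport (PhiK l ξ η ζ ζ') := by
  constructor
  · have c1 : Continuous fun p : QQ n × QQ n => ξ p.1.1.1 p.1.1.2 (p.1.2 + p.2.2) :=
      hξ.1.comp (show Continuous fun p : QQ n × QQ n =>
        (((p.1.1.1, p.1.1.2) : Rn n × Rn n), p.1.2 + p.2.2) by fun_prop)
    have c2 : Continuous fun p : QQ n × QQ n => (((Real.exp (l * p.2.2)) ^ n : ℝ) : ℂ) := by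
      fun_prop
    have c3 : Continuous fun p : QQ n × QQ n => (starRingEnd ℂ)
        (η (Real.exp (l * p.2.2) • p.1.1.1) (Real.exp (l * p.2.2) • p.1.1.2) p.1.2) :=
      RCLike.continuous_conj.comp (hη.1.comp (show Continuous fun p : QQ n × QQ n =>
        (((Real.exp (l * p.2.2) • p.1.1.1, Real.exp (l * p.2.2) • p.1.1.2) : Rn n × Rn n),
          p.1.2) by fun_prop))
    have c4 : Continuous fun p : QQ n × QQ n => ζ (p.2.1.1 - p.1.1.1) (p.2.1.2 - p.1.1.2) p.2.2 :=
      hζ.1.comp (show Continuous fun p : QQ n × QQ n =>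
        (((p.2.1.1 - p.1.1.1, p.2.1.2 - p.1.1.2) : Rn n × Rn n), p.2.2) by fun_prop)
    have c5 : Continuous fun p : QQ n × QQ n =>
        ebar (eta l p.2.2 * beta p.1.1.1 (p.2.1.2 - p.1.1.2)) :=
      cont_ebar.comp (Continuous.mul ((cont_eta l).comp (by fun_prop))
        (cont_beta.comp (show Continuous fun p : QQ n × QQ n =>
          ((p.1.1.1, p.2.1.2 - p.1.1.2) : Rn n × Rn n) by fun_prop)))
    have c6 : Continuous fun p : QQ n × QQ n => (starRingEnd ℂ) (ζ' p.2.1.1 p.2.1.2 p.2.2) :=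
      RCLike.continuous_conj.comp (hζ'.1.comp (show Continuous fun p : QQ n × QQ n =>
        (((p.2.1.1, p.2.1.2) : Rn n × Rn n), p.2.2) by fun_prop))
    exact ((((c1.mul c2).mul c3).mul c4).mul c5).mul c6
  · obtain ⟨Cξ, hCξ⟩ := bound_r hξ
    obtain ⟨Cζ', hCζ'⟩ := bound_r hζ'
    apply HasCompactSupport.intro
      (K := ((Prod.fst '' tsupport (fun p : QQ n => ξ p.1.1 p.1.2 p.2)) ×ˢ
          Metric.closedBall (0 : ℝ) (Cξ + Cζ')) ×ˢ
          tsupport (fun p : QQ n => ζ' p.1.1 p.1.2 p.2))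
      (((IsCompact.image hξ.2 continuous_fst).prod (isCompact_closedBall 0 _)).prod hζ'.2)
    intro p hp
    by_contra hne
    apply hp
    have h1 : ξ p.1.1.1 p.1.1.2 (p.1.2 + p.2.2) ≠ 0 := by
      intro h0; apply hne; simp [PhiK, h0]
    have h6 : ζ' p.2.1.1 p.2.1.2 p.2.2 ≠ 0 := by
      intro h0; apply hne; simp [PhiK, h0]
    refine ⟨⟨⟨((p.1.1.1, p.1.1.2), p.1.2 + p.2.2), subset_tsupport _ h1, rfl⟩, ?_⟩, ?_⟩
    · have b1 : |p.1.2 + p.2.2| ≤ Cξ := hCξ _ _ _ h1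
      have b2 : |p.2.2| ≤ Cζ' := hCζ' _ _ _ h6
      have hb : |p.1.2| ≤ Cξ + Cζ' := by
        calc |p.1.2| = |p.1.2 + p.2.2 - p.2.2| := by ring_nf
          _ ≤ |p.1.2 + p.2.2| + |p.2.2| := abs_sub _ _
          _ ≤ Cξ + Cζ' := add_le_add b1 b2
      simpa [Real.dist_eq] using hb
    · exact subset_tsupport _ h6

theorem cc_LmbK {n : ℕ} (l : ℝ) {ξ ζ η ζ' : Rn n → Rn n → ℝ → ℂ}
    (hξ : CC ξ) (hζ : CC ζ) (hη : CC η) (hζ' : CC ζ') :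
    Continuous (LmbK l ξ ζ η ζ') ∧ HasCompactSupport (LmbK l ξ ζ η ζ') := by
  constructor
  · have c1 : Continuous fun p : QQ n × QQ n =>
        (((Real.exp (-l * p.2.2)) ^ n : ℝ) : ℂ) := by fun_prop
    have c2 : Continuous fun p : QQ n × QQ n =>
        ebar (eta l p.2.2 * beta (Real.exp (-l * p.2.2) • p.1.1.1)
          (p.2.1.2 - Real.exp (-l * p.2.2) • p.1.1.2)) :=
      cont_ebar.comp (Continuous.mul ((cont_eta l).comp (by fun_prop))
        (cont_beta.comp (show Continuous fun p : QQ n × QQ n =>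
          ((Real.exp (-l * p.2.2) • p.1.1.1,
            p.2.1.2 - Real.exp (-l * p.2.2) • p.1.1.2) : Rn n × Rn n) by fun_prop)))
    have c3 : Continuous fun p : QQ n × QQ n =>
        ξ (Real.exp (-l * p.2.2) • p.1.1.1) (Real.exp (-l * p.2.2) • p.1.1.2)
          (p.1.2 + p.2.2) :=
      hξ.1.comp (show Continuous fun p : QQ n × QQ n =>
        (((Real.exp (-l * p.2.2) • p.1.1.1, Real.exp (-l * p.2.2) • p.1.1.2) : Rn n × Rn n),
          p.1.2 + p.2.2) by fun_prop)
    have c4 : Continuous fun p : QQ n × QQ n =>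
        ζ (p.2.1.1 - Real.exp (-l * p.2.2) • p.1.1.1)
          (p.2.1.2 - Real.exp (-l * p.2.2) • p.1.1.2) p.2.2 :=
      hζ.1.comp (show Continuous fun p : QQ n × QQ n =>
        (((p.2.1.1 - Real.exp (-l * p.2.2) • p.1.1.1,
           p.2.1.2 - Real.exp (-l * p.2.2) • p.1.1.2) : Rn n × Rn n), p.2.2) by fun_prop)
    have c5 : Continuous fun p : QQ n × QQ n =>
        (starRingEnd ℂ) (η p.1.1.1 p.1.1.2 p.1.2 * ζ' p.2.1.1 p.2.1.2 p.2.2) :=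
      RCLike.continuous_conj.comp (Continuous.mul
        (hη.1.comp (show Continuous fun p : QQ n × QQ n =>
          (((p.1.1.1, p.1.1.2) : Rn n × Rn n), p.1.2) by fun_prop))
        (hζ'.1.comp (show Continuous fun p : QQ n × QQ n =>
          (((p.2.1.1, p.2.1.2) : Rn n × Rn n), p.2.2) by fun_prop)))
    exact (((c1.mul c2).mul (c3.mul c4)).mul c5 :)
  · apply HasCompactSupport.intro
      (K := tsupport (fun p : QQ n => η p.1.1 p.1.2 p.2) ×ˢ
            tsupport (fun p : QQ n => ζ' p.1.1 p.1.2 p.2))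
      (hη.2.prod hζ'.2)
    intro p hp
    by_contra hne
    apply hp
    have h5 : η p.1.1.1 p.1.1.2 p.1.2 * ζ' p.2.1.1 p.2.1.2 p.2.2 ≠ 0 := by
      intro h0
      apply hne
      simp only [LmbK, unc6, tens, h0, map_zero, mul_zero]
    exact ⟨subset_tsupport _ (left_ne_zero_of_mul h5),
           subset_tsupport _ (right_ne_zero_of_mul h5)⟩

end SliceAux

set_option maxHeartbeats 2000000 in
/-- the slice (ω_{ξ,η} ⊗ id)(U_A) equals L_f with f as displayed,
    and f is continuous with compact support -/
theorem slice_of_UA {n : ℕ} (l : ℝ) (ξ η : Rn n → Rn n → ℝ → ℂ)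
    (hξ : CC ξ) (hη : CC η) (f : Rn n → Rn n → ℝ → ℂ)
    (hform : ∀ xt yt r, f xt yt r =
      ∫ rt : ℝ, ξ xt yt (rt + r) * (((Real.exp (l * r)) ^ n : ℝ) : ℂ) *
        (starRingEnd ℂ) (η (Real.exp (l * r) • xt) (Real.exp (l * r) • yt) rt)) :
    CC f ∧
    ∀ ζ ζ' : Rn n → Rn n → ℝ → ℂ, CC ζ → CC ζ' →
      ip6 (Uop l (tens ξ ζ)) (tens η ζ') = ip (Lop l f ζ) ζ' := by
  constructor
  · -- f is continuous with compact support
    have gc : Continuous fun q : SliceAux.QQ n × ℝ =>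
        ξ q.1.1.1 q.1.1.2 (q.2 + q.1.2) * (((Real.exp (l * q.1.2)) ^ n : ℝ) : ℂ) *
          (starRingEnd ℂ)
            (η (Real.exp (l * q.1.2) • q.1.1.1) (Real.exp (l * q.1.2) • q.1.1.2) q.2) := by
      have c1 : Continuous fun q : SliceAux.QQ n × ℝ => ξ q.1.1.1 q.1.1.2 (q.2 + q.1.2) :=
        hξ.1.comp (show Continuous fun q : SliceAux.QQ n × ℝ =>
          (((q.1.1.1, q.1.1.2) : Rn n × Rn n), q.2 + q.1.2) by fun_prop)
      have c2 : Continuous fun q : SliceAux.QQ n × ℝ =>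
          (((Real.exp (l * q.1.2)) ^ n : ℝ) : ℂ) := by fun_prop
      have c3 : Continuous fun q : SliceAux.QQ n × ℝ => (starRingEnd ℂ)
          (η (Real.exp (l * q.1.2) • q.1.1.1) (Real.exp (l * q.1.2) • q.1.1.2) q.2) :=
        RCLike.continuous_conj.comp (hη.1.comp (show Continuous fun q : SliceAux.QQ n × ℝ =>
          (((Real.exp (l * q.1.2) • q.1.1.1, Real.exp (l * q.1.2) • q.1.1.2) : Rn n × Rn n),
            q.2) by fun_prop))
      exact (c1.mul c2).mul c3
    have gs : HasCompactSupport fun q : SliceAux.QQ n × ℝ =>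
        ξ q.1.1.1 q.1.1.2 (q.2 + q.1.2) * (((Real.exp (l * q.1.2)) ^ n : ℝ) : ℂ) *
          (starRingEnd ℂ)
            (η (Real.exp (l * q.1.2) • q.1.1.1) (Real.exp (l * q.1.2) • q.1.1.2) q.2) := by
      obtain ⟨Cξ, hCξ⟩ := SliceAux.bound_r hξ
      obtain ⟨Cη, hCη⟩ := SliceAux.bound_r hη
      apply HasCompactSupport.intro
        (K := ((Prod.fst '' tsupport (fun p : SliceAux.QQ n => ξ p.1.1 p.1.2 p.2)) ×ˢ
            Metric.closedBall (0 : ℝ) (Cξ + Cη)) ×ˢ Metric.closedBall (0 : ℝ) Cη)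
        (((IsCompact.image hξ.2 continuous_fst).prod (isCompact_closedBall 0 _)).prod
          (isCompact_closedBall 0 _))
      intro q hq
      by_contra hne
      apply hq
      have h1 : ξ q.1.1.1 q.1.1.2 (q.2 + q.1.2) ≠ 0 := by
        intro h0; apply hne; simp [h0]
      have h3 : η (Real.exp (l * q.1.2) • q.1.1.1) (Real.exp (l * q.1.2) • q.1.1.2) q.2 ≠ 0 := by
        intro h0; apply hne; simp [h0]
      have b2 : |q.2| ≤ Cη := hCη _ _ _ h3
      refine ⟨⟨⟨((q.1.1.1, q.1.1.2), q.2 + q.1.2), subset_tsupport _ h1, rfl⟩, ?_⟩, ?_⟩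
      · have b1 : |q.2 + q.1.2| ≤ Cξ := hCξ _ _ _ h1
        have hb : |q.1.2| ≤ Cξ + Cη := by
          calc |q.1.2| = |q.2 + q.1.2 - q.2| := by ring_nf
            _ ≤ |q.2 + q.1.2| + |q.2| := abs_sub _ _
            _ ≤ Cξ + Cη := add_le_add b1 b2
        simpa [Real.dist_eq] using hb
      · simpa [Real.dist_eq] using b2
    have hfe : (fun p : SliceAux.QQ n => f p.1.1 p.1.2 p.2) =
        fun p : SliceAux.QQ n => ∫ rt : ℝ,
          ξ p.1.1 p.1.2 (rt + p.2) * (((Real.exp (l * p.2)) ^ n : ℝ) : ℂ) *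
            (starRingEnd ℂ)
              (η (Real.exp (l * p.2) • p.1.1) (Real.exp (l * p.2) • p.1.2) rt) := by
      funext p
      exact hform p.1.1 p.1.2 p.2
    constructor
    · rw [show (fun p : (Rn n × Rn n) × ℝ => f p.1.1 p.1.2 p.2) = _ from hfe]
      exact SliceAux.cont_integral_param gc gs
    · rw [show (fun p : (Rn n × Rn n) × ℝ => f p.1.1 p.1.2 p.2) = _ from hfe]
      exact SliceAux.hcs_integral_param gs
  · intro ζ ζ' hζ hζ'
    have ccPhi := SliceAux.cc_PhiK l hξ hη hζ hζ'
    have ccLmb := SliceAux.cc_LmbK l hξ hζ hη hζ'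
    -- the right-hand side
    have hkey : ∀ x' y' : Rn n, ∀ r' : ℝ,
        tMul l f ζ x' y' r' * (starRingEnd ℂ) (ζ' x' y' r') =
          ∫ xt : Rn n, ∫ yt : Rn n, ∫ rt : ℝ,
            SliceAux.PhiK l ξ η ζ ζ' (((xt, yt), rt), ((x', y'), r')) := by
      intro x' y' r'
      calc tMul l f ζ x' y' r' * (starRingEnd ℂ) (ζ' x' y' r')
          = ∫ xt : Rn n, (∫ yt : Rn n,
              f xt yt r' * ζ (x' - xt) (y' - yt) r' *
                ebar (eta l r' * beta xt (y' - yt))) * (starRingEnd ℂ) (ζ' x' y' r') :=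
            (integral_mul_const _ _).symm
        _ = ∫ xt : Rn n, ∫ yt : Rn n,
              f xt yt r' * ζ (x' - xt) (y' - yt) r' *
                ebar (eta l r' * beta xt (y' - yt)) * (starRingEnd ℂ) (ζ' x' y' r') :=
            integral_congr_ae (Filter.Eventually.of_forall fun xt =>
              (integral_mul_const _ _).symm)
        _ = ∫ xt : Rn n, ∫ yt : Rn n, ∫ rt : ℝ,
              SliceAux.PhiK l ξ η ζ ζ' (((xt, yt), rt), ((x', y'), r')) := by
            refine integral_congr_ae (Filter.Eventually.of_forall fun xt =>
              integral_congr_ae (Filter.Eventually.of_forall fun yt => ?_))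
            calc f xt yt r' * ζ (x' - xt) (y' - yt) r' *
                  ebar (eta l r' * beta xt (y' - yt)) * (starRingEnd ℂ) (ζ' x' y' r')
                = (∫ rt : ℝ, ξ xt yt (rt + r') * (((Real.exp (l * r')) ^ n : ℝ) : ℂ) *
                      (starRingEnd ℂ)
                        (η (Real.exp (l * r') • xt) (Real.exp (l * r') • yt) rt)) *
                    (ζ (x' - xt) (y' - yt) r' * (ebar (eta l r' * beta xt (y' - yt)) *
                      (starRingEnd ℂ) (ζ' x' y' r'))) := by
                  rw [hform]; ring
              _ = ∫ rt : ℝ, ξ xt yt (rt + r') * (((Real.exp (l * r')) ^ n : ℝ) : ℂ) *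
                      (starRingEnd ℂ)
                        (η (Real.exp (l * r') • xt) (Real.exp (l * r') • yt) rt) *
                    (ζ (x' - xt) (y' - yt) r' * (ebar (eta l r' * beta xt (y' - yt)) *
                      (starRingEnd ℂ) (ζ' x' y' r'))) := (integral_mul_const _ _).symm
              _ = ∫ rt : ℝ, SliceAux.PhiK l ξ η ζ ζ' (((xt, yt), rt), ((x', y'), r')) := by
                  refine integral_congr_ae (Filter.Eventually.of_forall fun rt => ?_)
                  simp only [SliceAux.PhiK]
                  ring
    have hR : ip (Lop l f ζ) ζ' =
        ∫ b : SliceAux.QQ n, ∫ a : SliceAux.QQ n, SliceAux.PhiK l ξ η ζ ζ' (a, b) := by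
      calc ip (Lop l f ζ) ζ'
          = ∫ x' : Rn n, ∫ y' : Rn n, ∫ r' : ℝ,
              tMul l f ζ x' y' r' * (starRingEnd ℂ) (ζ' x' y' r') := rfl
        _ = ∫ x' : Rn n, ∫ y' : Rn n, ∫ r' : ℝ, ∫ xt : Rn n, ∫ yt : Rn n, ∫ rt : ℝ,
              SliceAux.PhiK l ξ η ζ ζ' (((xt, yt), rt), ((x', y'), r')) := by
            simp only [hkey]
        _ = ∫ b : SliceAux.QQ n, ∫ a : SliceAux.QQ n, SliceAux.PhiK l ξ η ζ ζ' (a, b) :=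
            SliceAux.iter6 (fun q => SliceAux.PhiK l ξ η ζ ζ' (q.2, q.1))
              (ccPhi.1.comp (continuous_snd.prodMk continuous_fst))
              (SliceAux.hcs_swap ccPhi.2)
    -- the left-hand side
    have hb : ∀ b : SliceAux.QQ n,
        (∫ p : SliceAux.QQ n, SliceAux.LmbK l ξ ζ η ζ' (p, b)) =
          ∫ a : SliceAux.QQ n, SliceAux.PhiK l ξ η ζ ζ' (a, b) := by
      rintro ⟨⟨x', y'⟩, r'⟩
      have hdc : ∀ u : Rn n, Real.exp (l * r') • Real.exp (-l * r') • u = u := by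
        intro u
        rw [smul_smul, ← Real.exp_add, show l * r' + -l * r' = 0 by ring, Real.exp_zero,
          one_smul]
      have hpt : ∀ (x y : Rn n) (r : ℝ),
          SliceAux.LmbK l ξ ζ η ζ' (((x, y), r), ((x', y'), r')) =
            SliceAux.A0 l ξ ζ η ζ' x' y' r' (Real.exp (-l * r') • x)
              (Real.exp (-l * r') • y) r := by
        intro x y r
        simp only [SliceAux.LmbK, SliceAux.A0, unc6, Uop, tens]
        rw [hdc, hdc]
      have hsc : |((Real.exp (-l * r')) ^ Module.finrank ℝ (Rn n))⁻¹| =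
          Real.exp (l * r') ^ n := by
        have hinv : (Real.exp (-l * r'))⁻¹ = Real.exp (l * r') := by
          rw [← Real.exp_neg]; ring_nf
        rw [Module.finrank_fin_fun, ← inv_pow, hinv,
          abs_of_pos (pow_pos (Real.exp_pos _) _)]
      have hpt2 : ∀ (u v : Rn n) (r : ℝ),
          (Real.exp (l * r') ^ n) • (Real.exp (l * r') ^ n) •
              SliceAux.A0 l ξ ζ η ζ' x' y' r' u v r =
            SliceAux.PhiK l ξ η ζ ζ' (((u, v), r), ((x', y'), r')) := by
        intro u v r
        simp only [SliceAux.A0, SliceAux.PhiK, Complex.real_smul, map_mul, Complex.ofReal_pow]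
        have h1 : (Real.exp (-l * r') : ℂ) ^ n * (Real.exp (l * r') : ℂ) ^ n = 1 := by
          rw [← mul_pow]
          norm_cast
          rw [← Real.exp_add, show -l * r' + l * r' = 0 by ring, Real.exp_zero, one_pow]
        linear_combination (ξ u v (r + r') * (Real.exp (l * r') : ℂ) ^ n *
          (starRingEnd ℂ) (η (Real.exp (l * r') • u) (Real.exp (l * r') • v) r) *
          ζ (x' - u) (y' - v) r' * ebar (eta l r' * beta u (y' - v)) *
          (starRingEnd ℂ) (ζ' x' y' r')) * h1
      have hsecC : Continuous fun p : SliceAux.QQ n =>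
          SliceAux.LmbK l ξ ζ η ζ' (p, ((x', y'), r')) :=
        ccLmb.1.comp (Continuous.prodMk_left _)
      have hsecS : HasCompactSupport fun p : SliceAux.QQ n =>
          SliceAux.LmbK l ξ ζ η ζ' (p, ((x', y'), r')) :=
        SliceAux.hcs_fst ccLmb.2 _
      have hsecC' : Continuous fun a : SliceAux.QQ n =>
          SliceAux.PhiK l ξ η ζ ζ' (a, ((x', y'), r')) :=
        ccPhi.1.comp (Continuous.prodMk_left _)
      have hsecS' : HasCompactSupport fun a : SliceAux.QQ n =>
          SliceAux.PhiK l ξ η ζ ζ' (a, ((x', y'), r')) :=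
        SliceAux.hcs_fst ccPhi.2 _
      calc ∫ p : SliceAux.QQ n, SliceAux.LmbK l ξ ζ η ζ' (p, ((x', y'), r'))
          = ∫ x : Rn n, ∫ y : Rn n, ∫ r : ℝ,
              SliceAux.LmbK l ξ ζ η ζ' (((x, y), r), ((x', y'), r')) :=
            (SliceAux.iter3 _ hsecC hsecS).symm
        _ = ∫ x : Rn n, ∫ y : Rn n, ∫ r : ℝ,
              SliceAux.A0 l ξ ζ η ζ' x' y' r' (Real.exp (-l * r') • x)
                (Real.exp (-l * r') • y) r := by
            simp only [hpt]
        _ = |((Real.exp (-l * r')) ^ Module.finrank ℝ (Rn n))⁻¹| •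
              ∫ u : Rn n, ∫ y : Rn n, ∫ r : ℝ,
                SliceAux.A0 l ξ ζ η ζ' x' y' r' u (Real.exp (-l * r') • y) r :=
            Measure.integral_comp_smul volume
              (fun u => ∫ y : Rn n, ∫ r : ℝ,
                SliceAux.A0 l ξ ζ η ζ' x' y' r' u (Real.exp (-l * r') • y) r)
              (Real.exp (-l * r'))
        _ = |((Real.exp (-l * r')) ^ Module.finrank ℝ (Rn n))⁻¹| •
              ∫ u : Rn n, |((Real.exp (-l * r')) ^ Module.finrank ℝ (Rn n))⁻¹| •
                ∫ v : Rn n, ∫ r : ℝ, SliceAux.A0 l ξ ζ η ζ' x' y' r' u v r := by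
            congr 1
            exact integral_congr_ae (Filter.Eventually.of_forall fun u =>
              Measure.integral_comp_smul volume
                (fun v => ∫ r : ℝ, SliceAux.A0 l ξ ζ η ζ' x' y' r' u v r)
                (Real.exp (-l * r')))
        _ = |((Real.exp (-l * r')) ^ Module.finrank ℝ (Rn n))⁻¹| •
              (|((Real.exp (-l * r')) ^ Module.finrank ℝ (Rn n))⁻¹| •
                ∫ u : Rn n, ∫ v : Rn n, ∫ r : ℝ, SliceAux.A0 l ξ ζ η ζ' x' y' r' u v r) := by
            rw [integral_smul]
        _ = ∫ u : Rn n, ∫ v : Rn n, ∫ r : ℝ,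
              SliceAux.PhiK l ξ η ζ ζ' (((u, v), r), ((x', y'), r')) := by
            have hpush1 : ∀ u v : Rn n,
                (Real.exp (l * r') ^ n) • (Real.exp (l * r') ^ n) •
                    (∫ r : ℝ, SliceAux.A0 l ξ ζ η ζ' x' y' r' u v r) =
                  ∫ r : ℝ, SliceAux.PhiK l ξ η ζ ζ' (((u, v), r), ((x', y'), r')) := by
              intro u v
              rw [← integral_smul, ← integral_smul]
              exact integral_congr_ae (Filter.Eventually.of_forall fun r => hpt2 u v r)
            have hpush2 : ∀ u : Rn n,
                (Real.exp (l * r') ^ n) • (Real.exp (l * r') ^ n) •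
                    (∫ v : Rn n, ∫ r : ℝ, SliceAux.A0 l ξ ζ η ζ' x' y' r' u v r) =
                  ∫ v : Rn n, ∫ r : ℝ,
                    SliceAux.PhiK l ξ η ζ ζ' (((u, v), r), ((x', y'), r')) := by
              intro u
              rw [← integral_smul, ← integral_smul]
              exact integral_congr_ae (Filter.Eventually.of_forall fun v => hpush1 u v)
            rw [hsc, ← integral_smul, ← integral_smul]
            exact integral_congr_ae (Filter.Eventually.of_forall fun u => hpush2 u)
        _ = ∫ a : SliceAux.QQ n, SliceAux.PhiK l ξ η ζ ζ' (a, ((x', y'), r')) :=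
            SliceAux.iter3 _ hsecC' hsecS'
    have hL : ip6 (Uop l (tens ξ ζ)) (tens η ζ') =
        ∫ b : SliceAux.QQ n, ∫ a : SliceAux.QQ n, SliceAux.PhiK l ξ η ζ ζ' (a, b) := by
      calc ip6 (Uop l (tens ξ ζ)) (tens η ζ')
          = ∫ x : Rn n, ∫ y : Rn n, ∫ r : ℝ, ∫ x' : Rn n, ∫ y' : Rn n, ∫ r' : ℝ,
              SliceAux.LmbK l ξ ζ η ζ' (((x, y), r), ((x', y'), r')) := rfl
        _ = ∫ p : SliceAux.QQ n, ∫ b : SliceAux.QQ n, SliceAux.LmbK l ξ ζ η ζ' (p, b) :=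
            SliceAux.iter6 _ ccLmb.1 ccLmb.2
        _ = ∫ b : SliceAux.QQ n, ∫ p : SliceAux.QQ n, SliceAux.LmbK l ξ ζ η ζ' (p, b) :=
            SliceAux.swap6 _ ccLmb.1 ccLmb.2
        _ = ∫ b : SliceAux.QQ n, ∫ a : SliceAux.QQ n, SliceAux.PhiK l ξ η ζ ζ' (a, b) := by
            simp only [hb]
    rw [hL, hR]
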